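/- Under the covariate-adjusted β-model, with T_ij, V, V_{γβ} and s_ij as in the context and V invertible, the covariance matrix of the random vector Σ_{i<j} s_ij equals H(β*,γ*) := Σ_{i<j} μ′(π*_ij) z_ij z_ij^⊤ − V_{γβ} V^{−1} V_{γβ}^⊤. -/

import Mathlib

open MeasureTheory ProbabilityTheory Real Filter Finset Matrix BoundedContinuousFunction

noncomputable section

/-- The logistic function `μ(x) = eˣ/(1+eˣ)`. -/
def mu (x : ℝ) : ℝ := exp x / (1 + exp x)

/-- First derivative `μ′(x) = eˣ/(1+eˣ)²`. -/
def mu' (x : ℝ) : ℝ := exp x / (1 + exp x) ^ 2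

/-- Second derivative `μ″(x) = eˣ(1-eˣ)/(1+eˣ)³`. -/
def mu'' (x : ℝ) : ℝ := exp x * (1 - exp x) / (1 + exp x) ^ 3

/-- `z_* = max_{i<j} ‖z_ij‖_∞`. -/
def zsup {n p : ℕ} (z : Fin n → Fin n → Fin p → ℝ) : ℝ := ⨆ i, ⨆ j, ⨆ t, |z i j t|

/-- the linear predictor `π_ij = β_i + β_j + z_ij^⊤ γ`. -/
def linpred {n p : ℕ} (z : Fin n → Fin n → Fin p → ℝ) (β : Fin n → ℝ) (γ : Fin p → ℝ)
    (i j : Fin n) : ℝ := β i + β j + ∑ t, z i j t * γ t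

/-- the degree `d_i = ∑_{j ≠ i} a_ij`. -/
def degree {n : ℕ} {Ω : Type*} (a : Fin n → Fin n → Ω → ℝ) (i : Fin n) (ω : Ω) : ℝ :=
  ∑ j ∈ univ.erase i, a i j ω

/-- `v_ii = ∑_{j≠i} μ′(π*_ij)`. -/
def vdiag {n p : ℕ} (z : Fin n → Fin n → Fin p → ℝ) (βs : Fin n → ℝ) (γs : Fin p → ℝ)
    (i : Fin n) : ℝ := ∑ j ∈ univ.erase i, mu' (linpred z βs γs i j)

/-- All model assumptions of the covariate-adjusted β-model
(without differentially private release). -/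
structure BetaModel {Ω : Type*} [MeasurableSpace Ω] (P : Measure Ω) (n p : ℕ)
    (z : Fin n → Fin n → Fin p → ℝ) (βs : Fin n → ℝ) (γs : Fin p → ℝ)
    (a : Fin n → Fin n → Ω → ℝ) : Prop where
  hzsym : ∀ i j, z i j = z j i
  hasym : ∀ i j, a i j = a j i
  hadiag : ∀ i, a i i = 0
  hameas : ∀ i j, Measurable (a i j)
  ha01 : ∀ i j ω, a i j ω = 0 ∨ a i j ω = 1
  haBern : ∀ i j, i ≠ j → P {ω | a i j ω = 1} = ENNReal.ofReal (mu (linpred z βs γs i j))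
  hindep : iIndepFun
    (fun q : {q : Fin n × Fin n // q.1 < q.2} => a q.1.1 q.1.2) P

end

noncomputable section

/-- the Fisher information matrix `V` of `β`. -/
def Vmat {n p : ℕ} (z : Fin n → Fin n → Fin p → ℝ) (β : Fin n → ℝ) (γ : Fin p → ℝ) :
    Matrix (Fin n) (Fin n) ℝ :=
  Matrix.of fun i j =>
    if i = j then ∑ l ∈ univ.erase i, mu' (linpred z β γ i l) else mu' (linpred z β γ i j)

/-- the `p×n` matrix `V_{γβ}` with `(V_{γβ})_{tj} = ∑_{i≠j} z_ijt μ′(π*_ij)`. -/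
def Vgb {n p : ℕ} (z : Fin n → Fin n → Fin p → ℝ) (β : Fin n → ℝ) (γ : Fin p → ℝ) :
    Matrix (Fin p) (Fin n) ℝ :=
  Matrix.of fun t j => ∑ i ∈ univ.erase j, z i j t * mu' (linpred z β γ i j)

/-- `T_ij ∈ ℝⁿ`: one in the `i`-th and `j`-th entries and zero elsewhere. -/
def Tvec {n : ℕ} (i j : Fin n) : Fin n → ℝ := fun l => if l = i ∨ l = j then 1 else 0

/-- `s_ij = (a_ij − E a_ij)(z_ij − V_{γβ} V⁻¹ T_ij) ∈ ℝᵖ`. -/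
def sij {n p : ℕ} {Ω : Type*} (z : Fin n → Fin n → Fin p → ℝ) (βs : Fin n → ℝ)
    (γs : Fin p → ℝ) (a : Fin n → Fin n → Ω → ℝ) (i j : Fin n) (ω : Ω) (t : Fin p) : ℝ :=
  (a i j ω - mu (linpred z βs γs i j)) *
    (z i j t - (Vgb z βs γs * (Vmat z βs γs)⁻¹).mulVec (Tvec i j) t)

/-- `S = ∑_{i<j} s_ij`. -/
def Ssum {n p : ℕ} {Ω : Type*} (z : Fin n → Fin n → Fin p → ℝ) (βs : Fin n → ℝ)
    (γs : Fin p → ℝ) (a : Fin n → Fin n → Ω → ℝ) (t : Fin p) (ω : Ω) : ℝ :=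
  ∑ i, ∑ j ∈ univ.filter (fun j => i < j), sij z βs γs a i j ω t

lemma mu_nonneg (x : ℝ) : 0 ≤ mu x := by
  unfold mu; positivity

lemma mu'_eq (x : ℝ) : mu' x = mu x * (1 - mu x) := by
  unfold mu mu'
  have h : (1 : ℝ) + exp x ≠ 0 := by positivity
  field_simp; ring

lemma pair_split {n : ℕ} (f : Fin n → Fin n → ℝ) :
    ((∑ i, ∑ j ∈ univ.filter (fun j => i < j), f i j)
      + ∑ i, ∑ j ∈ univ.filter (fun j => i < j), f j i)
      = ∑ i, ∑ j ∈ univ.erase i, f i j := by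
  have h1 : ∀ i : Fin n, ∑ j ∈ univ.erase i, f i j
      = (∑ j ∈ univ.filter (fun j => i < j), f i j)
        + ∑ j ∈ univ.filter (fun j => j < i), f i j := by
    intro i
    rw [← Finset.sum_filter_add_sum_filter_not (univ.erase i) (fun j => i < j)]
    congr 1
    · apply Finset.sum_congr _ (fun _ _ => rfl)
      ext j; simp only [Finset.mem_filter, Finset.mem_erase, Finset.mem_univ, and_true,
        true_and]
      constructor
      · rintro ⟨_, h⟩; exact h
      · intro h; exact ⟨Ne.symm (ne_of_lt h), h⟩
    · apply Finset.sum_congr _ (fun _ _ => rfl)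
      ext j; simp only [Finset.mem_filter, Finset.mem_erase, Finset.mem_univ, and_true,
        true_and]
      constructor
      · rintro ⟨hne, hnl⟩; exact lt_of_le_of_ne (not_lt.1 hnl) hne
      · intro h; exact ⟨ne_of_lt h, not_lt.2 (le_of_lt h)⟩
  have h2 : ∑ i, ∑ j ∈ univ.filter (fun j => j < i), f i j
      = ∑ i, ∑ j ∈ univ.filter (fun j => i < j), f j i := by
    simp only [Finset.sum_filter]
    exact Finset.sum_comm
  simp only [h1, Finset.sum_add_distrib, h2]

lemma sym_pair_sum {n : ℕ} (f g : Fin n → Fin n → ℝ) (hf : ∀ i j, f i j = f j i) :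
    ∑ i, ∑ j ∈ univ.filter (fun j => i < j), f i j * (g i j + g j i)
      = ∑ i, ∑ j ∈ univ.erase i, f i j * g i j := by
  rw [← pair_split (fun i j => f i j * g i j)]
  simp only [mul_add, Finset.sum_add_distrib]
  congr 1
  apply Finset.sum_congr rfl; intro i _
  apply Finset.sum_congr rfl; intro j _
  rw [hf j i]


section Alg
variable {n p : ℕ} (z : Fin n → Fin n → Fin p → ℝ) (βs : Fin n → ℝ) (γs : Fin p → ℝ)

lemma linpred_symm (hzsym : ∀ i j, z i j = z j i) (i j : Fin n) :
    linpred z βs γs i j = linpred z βs γs j i := by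
  simp only [linpred, hzsym i j]; ring

lemma mulVec_Tvec (M : Matrix (Fin p) (Fin n) ℝ) {i j : Fin n} (h : i ≠ j) (u : Fin p) :
    M.mulVec (Tvec i j) u = M u i + M u j := by
  have hsplit : ∀ x : Fin n, Tvec i j x
      = (if x = i then (1:ℝ) else 0) + (if x = j then (1:ℝ) else 0) := by
    intro x
    by_cases hxi : x = i <;> by_cases hxj : x = j <;>
      simp [Tvec, hxi, hxj] <;> simp_all
  simp only [Matrix.mulVec, dotProduct, hsplit, mul_add, Finset.sum_add_distrib,
    mul_ite, mul_one, mul_zero, Finset.sum_ite_eq', Finset.mem_univ, if_true]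

lemma Vmat_symm (hzsym : ∀ i j, z i j = z j i) : (Vmat z βs γs)ᵀ = Vmat z βs γs := by
  ext i j
  by_cases h : i = j
  · simp [h, Vmat]
  · simp [Vmat, Matrix.transpose_apply, h, Ne.symm h, linpred_symm z βs γs hzsym j i]

lemma alg_identity (hzsym : ∀ i j, z i j = z j i) (hV : IsUnit (Vmat z βs γs).det)
    (t s : Fin p) :
    ∑ i, ∑ j ∈ univ.filter (fun j => i < j),
      mu' (linpred z βs γs i j) *
        ((z i j t - (Vgb z βs γs * (Vmat z βs γs)⁻¹).mulVec (Tvec i j) t) *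
         (z i j s - (Vgb z βs γs * (Vmat z βs γs)⁻¹).mulVec (Tvec i j) s))
    = (∑ i, ∑ j ∈ univ.filter (fun j => i < j),
        mu' (linpred z βs γs i j) * z i j t * z i j s)
      - (Vgb z βs γs * (Vmat z βs γs)⁻¹ * (Vgb z βs γs)ᵀ) t s := by
  set m : Fin n → Fin n → ℝ := fun i j => mu' (linpred z βs γs i j) with hm
  set F : Matrix (Fin p) (Fin n) ℝ := Vgb z βs γs * (Vmat z βs γs)⁻¹ with hF
  have hmsym : ∀ i j, m i j = m j i := fun i j => by
    simp only [hm, linpred_symm z βs γs hzsym i j]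
  have hzs : ∀ (i j : Fin n) (u : Fin p), z i j u = z j i u := fun i j u => by
    rw [hzsym i j]
  have hmv : ∀ (j i : Fin n), mu' (linpred z βs γs j i) = m j i := fun _ _ => rfl
  have hFt : Fᵀ = (Vmat z βs γs)⁻¹ * (Vgb z βs γs)ᵀ := by
    rw [hF, Matrix.transpose_mul, Matrix.transpose_nonsing_inv,
      Vmat_symm z βs γs hzsym]
  have hQsym : ∀ u v : Fin p, (F * (Vgb z βs γs)ᵀ) u v = (F * (Vgb z βs γs)ᵀ) v u := by
    intro u v
    have h1 : (F * (Vgb z βs γs)ᵀ)ᵀ = F * (Vgb z βs γs)ᵀ := by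
      rw [Matrix.transpose_mul, Matrix.transpose_transpose, hFt, hF, Matrix.mul_assoc]
    conv_lhs => rw [← h1]
    rfl
  have hFV : F * Vmat z βs γs = Vgb z βs γs := by
    rw [hF, Matrix.mul_assoc, Matrix.nonsing_inv_mul _ hV, Matrix.mul_one]
  have hexp : ∀ i j : Fin n, i < j →
      m i j * ((z i j t - F.mulVec (Tvec i j) t) * (z i j s - F.mulVec (Tvec i j) s))
      = m i j * z i j t * z i j s
        - (m i j * z i j t) * (F s i + F s j)
        - (m i j * z i j s) * (F t i + F t j)
        + (m i j * ((F t i * F s i + F t j * F s j) + (F t i * F s j + F t j * F s i))) := by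
    intro i j hij
    rw [mulVec_Tvec F (ne_of_lt hij) t, mulVec_Tvec F (ne_of_lt hij) s]
    ring
  rw [Finset.sum_congr rfl (fun i _ => Finset.sum_congr rfl
    (fun j hj => hexp i j (by simpa using hj)))]
  simp only [Finset.sum_add_distrib, Finset.sum_sub_distrib]
  have hS2 : ∑ i, ∑ j ∈ univ.filter (fun j => i < j),
      (m i j * z i j t) * (F s i + F s j) = (F * (Vgb z βs γs)ᵀ) s t := by
    rw [sym_pair_sum (fun i j => m i j * z i j t) (fun i j => F s i)
      (fun i j => by rw [hmsym i j, hzs i j t]), Matrix.mul_apply]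
    apply Finset.sum_congr rfl
    intro i _
    rw [Matrix.transpose_apply]
    show ∑ j ∈ univ.erase i, m i j * z i j t * F s i = F s i * Vgb z βs γs t i
    simp only [Vgb, Matrix.of_apply, Finset.mul_sum, hmv]
    apply Finset.sum_congr rfl
    intro j _
    rw [hzs i j t, hmsym i j]; ring
  have hS3 : ∑ i, ∑ j ∈ univ.filter (fun j => i < j),
      (m i j * z i j s) * (F t i + F t j) = (F * (Vgb z βs γs)ᵀ) t s := by
    rw [sym_pair_sum (fun i j => m i j * z i j s) (fun i j => F t i)
      (fun i j => by rw [hmsym i j, hzs i j s]), Matrix.mul_apply]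
    apply Finset.sum_congr rfl
    intro i _
    rw [Matrix.transpose_apply]
    show ∑ j ∈ univ.erase i, m i j * z i j s * F t i = F t i * Vgb z βs γs s i
    simp only [Vgb, Matrix.of_apply, Finset.mul_sum, hmv]
    apply Finset.sum_congr rfl
    intro j _
    rw [hzs i j s, hmsym i j]; ring
  have hS4 : ∑ i, ∑ j ∈ univ.filter (fun j => i < j),
      m i j * ((F t i * F s i + F t j * F s j) + (F t i * F s j + F t j * F s i))
      = (F * (Vgb z βs γs)ᵀ) t s := by
    have key : (F * (Vgb z βs γs)ᵀ) t s
        = ∑ i, F t i * (∑ j, Vmat z βs γs i j * F s j) := by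
      have h2 : F * (Vgb z βs γs)ᵀ = F * (Vmat z βs γs * Fᵀ) := by
        rw [← Matrix.mul_assoc, hFV, hFt, ← Matrix.mul_assoc, ← hF]
      rw [h2, Matrix.mul_apply]
      apply Finset.sum_congr rfl
      intro i _
      rw [Matrix.mul_apply]
      simp only [Matrix.transpose_apply]
    rw [key]
    have hpt : ∀ i j : Fin n,
        m i j * ((F t i * F s i + F t j * F s j) + (F t i * F s j + F t j * F s i))
        = m i j * (F t i * F s i + F t j * F s j)
          + m i j * (F t i * F s j + F t j * F s i) := fun i j => by ring
    rw [Finset.sum_congr rfl (fun i _ => Finset.sum_congr rfl (fun j _ => hpt i j))]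
    simp only [Finset.sum_add_distrib]
    rw [sym_pair_sum m (fun i j => F t i * F s i) hmsym,
      sym_pair_sum m (fun i j => F t i * F s j) hmsym,
      ← Finset.sum_add_distrib]
    apply Finset.sum_congr rfl
    intro i _
    have hsplit : ∑ j, Vmat z βs γs i j * F s j
        = (∑ l ∈ univ.erase i, m i l) * F s i + ∑ j ∈ univ.erase i, m i j * F s j := by
      rw [← Finset.add_sum_erase univ _ (Finset.mem_univ i)]
      congr 1
      · simp [Vmat, hm]
      · apply Finset.sum_congr rfl
        intro j hj
        have hne : ¬ i = j := fun h => (Finset.mem_erase.1 hj).1 h.symm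
        simp [Vmat, hne, hm]
    rw [hsplit, mul_add]
    congr 1
    · rw [← Finset.sum_mul]; ring
    · rw [Finset.mul_sum]
      apply Finset.sum_congr rfl
      intro j _
      ring
  rw [hS2, hS3, hS4, hQsym s t]
  ring

end Alg

lemma mu_le_one (x : ℝ) : mu x ≤ 1 := by
  unfold mu
  rw [div_le_one (by positivity)]
  linarith


section Prob
variable {Ω : Type*} [MeasurableSpace Ω] (P : Measure Ω) [IsProbabilityMeasure P]
  {n p : ℕ} (z : Fin n → Fin n → Fin p → ℝ) (βs : Fin n → ℝ) (γs : Fin p → ℝ)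
  (a : Fin n → Fin n → Ω → ℝ)
  (hameas : ∀ i j, Measurable (a i j))
  (ha01 : ∀ i j ω, a i j ω = 0 ∨ a i j ω = 1)
  (haBern : ∀ i j, i ≠ j → P {ω | a i j ω = 1} = ENNReal.ofReal (mu (linpred z βs γs i j)))

include hameas ha01 in
lemma a_integrable (i j : Fin n) : Integrable (a i j) P := by
  apply Integrable.mono' (integrable_const (1:ℝ)) (hameas i j).aestronglyMeasurable
  filter_upwards with ω
  rcases ha01 i j ω with h | h <;> rw [h] <;> norm_num

include hameas ha01 haBern in
lemma a_integral (i j : Fin n) (hij : i ≠ j) :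
    ∫ ω, a i j ω ∂P = mu (linpred z βs γs i j) := by
  have hs : MeasurableSet {ω | a i j ω = 1} := hameas i j (measurableSet_singleton 1)
  have hind : a i j = Set.indicator {ω | a i j ω = 1} (fun _ => (1:ℝ)) := by
    funext ω
    rcases ha01 i j ω with h | h <;> simp [Set.indicator_apply, h]
  calc ∫ ω, a i j ω ∂P = ∫ ω, Set.indicator {ω | a i j ω = 1} (fun _ => (1:ℝ)) ω ∂P := by
        rw [← hind]
    _ = (P {ω | a i j ω = 1}).toReal • (1:ℝ) := integral_indicator_const _ hs
    _ = mu (linpred z βs γs i j) := by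
        rw [haBern i j hij, ENNReal.toReal_ofReal (mu_nonneg _), smul_eq_mul, mul_one]

include hameas ha01 in
lemma X_integrable (i j : Fin n) :
    Integrable (fun ω => a i j ω - mu (linpred z βs γs i j)) P :=
  (a_integrable P a hameas ha01 i j).sub (integrable_const _)

include hameas ha01 haBern in
lemma X_integral (i j : Fin n) (hij : i ≠ j) :
    ∫ ω, (a i j ω - mu (linpred z βs γs i j)) ∂P = 0 := by
  rw [integral_sub (a_integrable P a hameas ha01 i j) (integrable_const _),
    a_integral P z βs γs a hameas ha01 haBern i j hij, integral_const]
  simp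

include hameas ha01 haBern in
lemma X_sq_integral (i j : Fin n) (hij : i ≠ j) :
    ∫ ω, (a i j ω - mu (linpred z βs γs i j)) * (a i j ω - mu (linpred z βs γs i j)) ∂P
      = mu' (linpred z βs γs i j) := by
  set μ0 : ℝ := mu (linpred z βs γs i j) with hμ0
  have hpt : ∀ ω, (a i j ω - μ0) * (a i j ω - μ0) = (1 - 2*μ0) * a i j ω + μ0^2 := by
    intro ω
    rcases ha01 i j ω with h | h <;> rw [h] <;> ring
  rw [integral_congr_ae (Filter.Eventually.of_forall hpt),
    integral_add ((a_integrable P a hameas ha01 i j).const_mul _) (integrable_const _),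
    integral_const_mul, a_integral P z βs γs a hameas ha01 haBern i j hij, integral_const]
  simp only [measure_univ, probReal_univ, ENNReal.toReal_one, one_smul, smul_eq_mul]
  rw [mu'_eq]
  ring

include hameas ha01 in
lemma XX_integrable (i j k l : Fin n) :
    Integrable (fun ω => (a i j ω - mu (linpred z βs γs i j))
      * (a k l ω - mu (linpred z βs γs k l))) P := by
  apply Integrable.mono' (integrable_const (4:ℝ))
  · exact (((hameas i j).sub measurable_const).mul
      ((hameas k l).sub measurable_const)).aestronglyMeasurable
  · filter_upwards with ω
    have hb : ∀ i' j' : Fin n, |a i' j' ω - mu (linpred z βs γs i' j')| ≤ 2 := by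
      intro i' j'
      have h1 := mu_nonneg (linpred z βs γs i' j')
      have h2 := mu_le_one (linpred z βs γs i' j')
      rcases ha01 i' j' ω with h | h <;> rw [h, abs_le] <;> constructor <;> linarith
    calc ‖(a i j ω - mu (linpred z βs γs i j)) * (a k l ω - mu (linpred z βs γs k l))‖
        = |a i j ω - mu (linpred z βs γs i j)| * |a k l ω - mu (linpred z βs γs k l)| := by
          rw [norm_mul]; rfl
      _ ≤ 2 * 2 := by
          apply mul_le_mul (hb i j) (hb k l) (abs_nonneg _) (by norm_num)
      _ = 4 := by norm_num


include hameas ha01 haBern in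
lemma X_cross (hindep : iIndepFun
      (fun q : {q : Fin n × Fin n // q.1 < q.2} => a q.1.1 q.1.2) P)
    (i j k l : Fin n) (hij : i < j) (hkl : k < l) (hne : ¬(k = i ∧ l = j)) :
    ∫ ω, (a i j ω - mu (linpred z βs γs i j)) * (a k l ω - mu (linpred z βs γs k l)) ∂P
      = 0 := by
  have hne' : (⟨(i, j), hij⟩ : {q : Fin n × Fin n // q.1 < q.2}) ≠ ⟨(k, l), hkl⟩ := by
    simp only [ne_eq, Subtype.mk.injEq, Prod.mk.injEq]
    rintro ⟨h1, h2⟩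
    exact hne ⟨h1.symm, h2.symm⟩
  have hIF : IndepFun (a i j) (a k l) P := hindep.indepFun hne'
  have hIX : IndepFun (fun ω => a i j ω - mu (linpred z βs γs i j))
      (fun ω => a k l ω - mu (linpred z βs γs k l)) P :=
    hIF.comp (measurable_id.sub_const _) (measurable_id.sub_const _)
  have := hIX.integral_mul_eq_mul_integral
    (X_integrable P z βs γs a hameas ha01 i j).aestronglyMeasurable
    (X_integrable P z βs γs a hameas ha01 k l).aestronglyMeasurable
  have hgoal : ∫ ω, (a i j ω - mu (linpred z βs γs i j))
      * (a k l ω - mu (linpred z βs γs k l)) ∂P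
      = (∫ ω, (a i j ω - mu (linpred z βs γs i j)) ∂P)
        * ∫ ω, (a k l ω - mu (linpred z βs γs k l)) ∂P := this
  rw [hgoal, X_integral P z βs γs a hameas ha01 haBern i j (ne_of_lt hij)]
  ring

end Prob

/-- the covariance matrix of `∑_{i<j} s_ij` equals
`H(β*,γ*) = ∑_{i<j} μ′(π*_ij) z_ij z_ij^⊤ − V_{γβ} V⁻¹ V_{γβ}^⊤`. -/
theorem beta_model_sij_covariance
    {Ω : Type*} [MeasurableSpace Ω] (P : Measure Ω) [IsProbabilityMeasure P]
    (n p : ℕ) (hn : 2 ≤ n)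
    (z : Fin n → Fin n → Fin p → ℝ) (βs : Fin n → ℝ) (γs : Fin p → ℝ)
    (a : Fin n → Fin n → Ω → ℝ)
    (hmodel : BetaModel P n p z βs γs a)
    (hV : IsUnit (Vmat z βs γs).det) :
    ∀ t s : Fin p,
      ∫ ω, (Ssum z βs γs a t ω - ∫ ω', Ssum z βs γs a t ω' ∂P) *
          (Ssum z βs γs a s ω - ∫ ω', Ssum z βs γs a s ω' ∂P) ∂P =
        (∑ i, ∑ j ∈ univ.filter (fun j => i < j),
            mu' (linpred z βs γs i j) * z i j t * z i j s) -
          (Vgb z βs γs * (Vmat z βs γs)⁻¹ * (Vgb z βs γs)ᵀ) t s := by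
  intro t s
  obtain ⟨hzsym, hasym, hadiag, hameas, ha01, haBern, hindep⟩ := hmodel
  -- integrability of summands
  have hsij_int : ∀ (i j : Fin n) (u : Fin p),
      Integrable (fun ω => sij z βs γs a i j ω u) P := fun i j u =>
    (X_integrable P z βs γs a hameas ha01 i j).mul_const _
  have hSint : ∀ u, Integrable (fun ω => Ssum z βs γs a u ω) P := fun u =>
    integrable_finset_sum _ (fun i _ => integrable_finset_sum _ (fun j _ => hsij_int i j u))
  -- each sij has mean zero
  have hsij_zero : ∀ (u : Fin p) (i j : Fin n), i < j →
      ∫ ω, sij z βs γs a i j ω u ∂P = 0 := by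
    intro u i j hij
    have h1 : ∫ ω, sij z βs γs a i j ω u ∂P
        = (∫ ω, (a i j ω - mu (linpred z βs γs i j)) ∂P) *
          (z i j u - (Vgb z βs γs * (Vmat z βs γs)⁻¹).mulVec (Tvec i j) u) :=
      integral_mul_const _ _
    rw [h1, X_integral P z βs γs a hameas ha01 haBern i j (ne_of_lt hij)]
    ring
  have hSzero : ∀ u, ∫ ω, Ssum z βs γs a u ω ∂P = 0 := by
    intro u
    simp only [Ssum]
    rw [integral_finset_sum _ (fun i _ => integrable_finset_sum _ (fun j _ => hsij_int i j u))]
    apply Finset.sum_eq_zero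
    intro i _
    rw [integral_finset_sum _ (fun j _ => hsij_int i j u)]
    apply Finset.sum_eq_zero
    intro j hj
    exact hsij_zero u i j (by simpa using hj)
  rw [hSzero t, hSzero s]
  simp only [sub_zero]
  -- expand product of sums
  have hprod : ∀ ω, Ssum z βs γs a t ω * Ssum z βs γs a s ω
      = ∑ i, ∑ j ∈ univ.filter (fun j => i < j), ∑ k, ∑ l ∈ univ.filter (fun l => k < l),
          sij z βs γs a i j ω t * sij z βs γs a k l ω s := by
    intro ω
    simp only [Ssum]
    rw [Finset.sum_mul]
    apply Finset.sum_congr rfl; intro i _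
    rw [Finset.sum_mul]
    apply Finset.sum_congr rfl; intro j _
    rw [Finset.mul_sum]
    apply Finset.sum_congr rfl; intro k _
    rw [Finset.mul_sum]
  -- integrability of products
  have hsp : ∀ i j k l : Fin n,
      Integrable (fun ω => sij z βs γs a i j ω t * sij z βs γs a k l ω s) P := by
    intro i j k l
    apply ((XX_integrable P z βs γs a hameas ha01 i j k l).mul_const
      ((z i j t - (Vgb z βs γs * (Vmat z βs γs)⁻¹).mulVec (Tvec i j) t) *
        (z k l s - (Vgb z βs γs * (Vmat z βs γs)⁻¹).mulVec (Tvec k l) s))).congr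
    filter_upwards with ω
    show _ = sij z βs γs a i j ω t * sij z βs γs a k l ω s
    simp only [sij]
    ring
  -- expectation of each product
  have hEXX : ∀ i j k l : Fin n, i < j → k < l →
      ∫ ω, sij z βs γs a i j ω t * sij z βs γs a k l ω s ∂P
      = if k = i ∧ l = j then
          mu' (linpred z βs γs i j) *
            ((z i j t - (Vgb z βs γs * (Vmat z βs γs)⁻¹).mulVec (Tvec i j) t) *
             (z i j s - (Vgb z βs γs * (Vmat z βs γs)⁻¹).mulVec (Tvec i j) s))
        else 0 := by
    intro i j k l hij hkl
    have hsw : ∫ ω, sij z βs γs a i j ω t * sij z βs γs a k l ω s ∂P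
        = (∫ ω, (a i j ω - mu (linpred z βs γs i j))
            * (a k l ω - mu (linpred z βs γs k l)) ∂P) *
          ((z i j t - (Vgb z βs γs * (Vmat z βs γs)⁻¹).mulVec (Tvec i j) t) *
           (z k l s - (Vgb z βs γs * (Vmat z βs γs)⁻¹).mulVec (Tvec k l) s)) := by
      rw [← integral_mul_const]
      apply integral_congr_ae
      filter_upwards with ω
      simp only [sij]
      ring
    by_cases hc : k = i ∧ l = j
    · obtain ⟨hk, hl⟩ := hc
      subst hk; subst hl
      rw [hsw, X_sq_integral P z βs γs a hameas ha01 haBern k l (ne_of_lt hkl),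
        if_pos ⟨rfl, rfl⟩]
    · rw [hsw, X_cross P z βs γs a hameas ha01 haBern hindep i j k l hij hkl hc,
        if_neg hc, zero_mul]
  -- push the integral through the quadruple sum
  have hint2 : ∀ i j k : Fin n, Integrable (fun ω => ∑ l ∈ univ.filter (fun l => k < l),
      sij z βs γs a i j ω t * sij z βs γs a k l ω s) P := fun i j k =>
    integrable_finset_sum _ (fun l _ => hsp i j k l)
  have hint3 : ∀ i j : Fin n, Integrable (fun ω => ∑ k, ∑ l ∈ univ.filter (fun l => k < l),
      sij z βs γs a i j ω t * sij z βs γs a k l ω s) P := fun i j =>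
    integrable_finset_sum _ (fun k _ => hint2 i j k)
  have hint4 : ∀ i : Fin n, Integrable (fun ω => ∑ j ∈ univ.filter (fun j => i < j),
      ∑ k, ∑ l ∈ univ.filter (fun l => k < l),
      sij z βs γs a i j ω t * sij z βs γs a k l ω s) P := fun i =>
    integrable_finset_sum _ (fun j _ => hint3 i j)
  rw [integral_congr_ae (Filter.Eventually.of_forall hprod),
    integral_finset_sum _ (fun i _ => hint4 i)]
  have hmain : ∀ i : Fin n, ∫ ω, (∑ j ∈ univ.filter (fun j => i < j),
      ∑ k, ∑ l ∈ univ.filter (fun l => k < l),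
      sij z βs γs a i j ω t * sij z βs γs a k l ω s) ∂P
      = ∑ j ∈ univ.filter (fun j => i < j),
          mu' (linpred z βs γs i j) *
            ((z i j t - (Vgb z βs γs * (Vmat z βs γs)⁻¹).mulVec (Tvec i j) t) *
             (z i j s - (Vgb z βs γs * (Vmat z βs γs)⁻¹).mulVec (Tvec i j) s)) := by
    intro i
    rw [integral_finset_sum _ (fun j _ => hint3 i j)]
    apply Finset.sum_congr rfl
    intro j hj
    have hij : i < j := by simpa using hj
    rw [integral_finset_sum _ (fun k _ => hint2 i j k)]
    have hinner : ∀ k : Fin n, ∫ ω, (∑ l ∈ univ.filter (fun l => k < l),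
        sij z βs γs a i j ω t * sij z βs γs a k l ω s) ∂P
        = ∑ l ∈ univ.filter (fun l => k < l),
            if k = i ∧ l = j then
              mu' (linpred z βs γs i j) *
                ((z i j t - (Vgb z βs γs * (Vmat z βs γs)⁻¹).mulVec (Tvec i j) t) *
                 (z i j s - (Vgb z βs γs * (Vmat z βs γs)⁻¹).mulVec (Tvec i j) s))
            else 0 := by
      intro k
      rw [integral_finset_sum _ (fun l _ => hsp i j k l)]
      apply Finset.sum_congr rfl
      intro l hl
      exact hEXX i j k l hij (by simpa using hl)
    rw [Finset.sum_congr rfl (fun k _ => hinner k)]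
    -- collapse the double indicator sum
    rw [Finset.sum_eq_single i]
    · simp only [true_and]
      rw [Finset.sum_ite_eq' (univ.filter (fun l => i < l)) j]
      rw [if_pos (by simpa using hij)]
    · intro k _ hk
      apply Finset.sum_eq_zero
      intro l _
      rw [if_neg (fun h => hk h.1)]
    · intro hi
      exact absurd (Finset.mem_univ i) hi
  rw [Finset.sum_congr rfl (fun i _ => hmain i)]
  exact alg_identity z βs γs hzsym hV t s


end
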